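/- For all natural numbers n and k with k ≤ n, the elementary symmetric sum ∑ x_1·x_2⋯x_k, taken over all strictly increasing integer sequences 1 ≤ x_1 < x_2 < ⋯ < x_k ≤ n (equivalently, over all k-element subsets of {1, 2, …, n}), equals the Stirling cycle number c(n+1, n+1−k). -/

import Mathlib

/-- The Stirling cycle number `c(n,k)`: the number of permutations of an
`n`-element set whose decomposition into disjoint cycles (counting fixed
points as cycles) consists of exactly `k` cycles. -/
noncomputable def stirlingCycle (n k : ℕ) : ℕ :=
  Nat.card {σ : Equiv.Perm (Fin n) //
    σ.cycleType.card + Nat.card {x : Fin n // σ x = x} = k}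

set_option linter.unusedSectionVars false
set_option linter.unusedVariables false
open Equiv Equiv.Perm Finset

variable {α : Type*} [Fintype α] [DecidableEq α]

-- fixed point of zpow
lemma fix_zpow {τ : Perm α} {a : α} (h : τ a = a) (i : ℤ) : (τ ^ i) a = a :=
  Function.IsFixedPt.perm_zpow h i

lemma orbit_ne_fix {τ : Perm α} {a b : α} (h : τ a = a) (hb : b ≠ a) (i : ℤ) :
    (τ ^ i) b ≠ a := fun hc => hb (by
  have := fix_zpow h i
  exact (τ ^ i).injective (by rw [hc, this]))

lemma not_sameCycle_fix {τ : Perm α} {a b : α} (h : τ a = a) (hb : b ≠ a) :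
    ¬ τ.SameCycle b a := fun ⟨i, hi⟩ => orbit_ne_fix h hb i hi

-- B1
lemma B1 {τ : Perm α} {a b : α} (ha : τ a = a) (hb : b ≠ a) {x : α}
    (hx : x ≠ a) (hsc : ¬ τ.SameCycle b x) :
    (Equiv.swap a b * τ) x = τ x := by
  have h1 : τ x ≠ a := fun hc => hx (τ.injective (by rw [hc, ha]))
  have h2 : τ x ≠ b := fun hc => hsc ⟨-1, by simp [← hc]⟩
  simp [Equiv.Perm.mul_apply, Equiv.swap_apply_of_ne_of_ne h1 h2]

set_option linter.unusedSectionVars false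


set_option linter.unusedSectionVars false

-- B2
lemma B2 {τ : Perm α} {a b : α} (ha : τ a = a) (hb : b ≠ a) {x : α} :
    (Equiv.swap a b * τ).SameCycle a x ↔ x = a ∨ τ.SameCycle b x := by
  set g := Equiv.swap a b * τ with hg
  have hga : g a = b := by simp [hg, ha]
  constructor
  · rintro hsc
    obtain ⟨i, -, rfl⟩ := hsc.exists_pow_eq'
    induction i with
    | zero => exact Or.inl rfl
    | succ i IH =>
      rw [pow_succ', Equiv.Perm.mul_apply]
      rcases IH ((⟨i, rfl⟩ : g.SameCycle a ((g^i) a))) with h | h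
      · rw [h, hga]; exact Or.inr (Equiv.Perm.SameCycle.refl _ _)
      · set y := (g ^ i) a with hy
        have hya : y ≠ a := fun hc => (not_sameCycle_fix ha hb) (hc ▸ h)
        have h1 : τ y ≠ a := fun hc => hya (τ.injective (by rw [hc, ha]))
        by_cases h2 : τ y = b
        · have : g y = a := by simp [hg, Equiv.Perm.mul_apply, h2]
          rw [this]; exact Or.inl rfl
        · have hgy : g y = τ y := by
            simp [hg, Equiv.Perm.mul_apply, Equiv.swap_apply_of_ne_of_ne h1 h2]
          rw [hgy]
          exact Or.inr h.apply_right
  · rintro (rfl | hsc)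
    · exact Equiv.Perm.SameCycle.refl _ _
    · obtain ⟨i, -, rfl⟩ := hsc.exists_pow_eq'
      induction i with
      | zero => exact ⟨1, by simpa using hga⟩
      | succ i IH =>
        have IH' := IH ⟨i, rfl⟩
        set y := (τ ^ i) b with hy
        rw [pow_succ', Equiv.Perm.mul_apply]
        have hya : y ≠ a := orbit_ne_fix ha hb i
        have h1 : τ y ≠ a := fun hc => hya (τ.injective (by rw [hc, ha]))
        by_cases h2 : τ y = b
        · rw [h2]; exact ⟨1, by simpa using hga⟩
        · have hgy : g y = τ y := by
            simp [hg, Equiv.Perm.mul_apply, Equiv.swap_apply_of_ne_of_ne h1 h2]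
          exact hgy ▸ IH'.apply_right

-- H: removing the cycle of a from σ
lemma Hrem (σ : Perm α) (a x : α) :
    (σ * (σ.cycleOf a)⁻¹) x = if σ.SameCycle a x then x else σ x := by
  by_cases h : σ.SameCycle a x
  · have h' : σ.SameCycle a (σ⁻¹ x) := Equiv.Perm.sameCycle_symm_apply_right.2 h
    have : (σ.cycleOf a)⁻¹ x = σ⁻¹ x := by
      apply (σ.cycleOf a).injective
      rw [← Equiv.Perm.mul_apply, mul_inv_cancel, Equiv.Perm.one_apply, Equiv.Perm.cycleOf_apply, if_pos h',
        ← Equiv.Perm.mul_apply, mul_inv_cancel, Equiv.Perm.one_apply]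
    simp [Equiv.Perm.mul_apply, this, h]
  · have : (σ.cycleOf a)⁻¹ x = x := by
      apply (σ.cycleOf a).injective
      rw [← Equiv.Perm.mul_apply, mul_inv_cancel, Equiv.Perm.one_apply, Equiv.Perm.cycleOf_apply_of_not_sameCycle h]
    simp [Equiv.Perm.mul_apply, this, h]

lemma keyB {τ : Perm α} {a b : α} (ha : τ a = a) (hb : b ≠ a) (hbs : τ b ≠ b) :
    Multiset.card (Equiv.swap a b * τ).cycleType = Multiset.card τ.cycleType ∧
    (Equiv.swap a b * τ).support.card = τ.support.card + 1 := by
  set g := Equiv.swap a b * τ with hg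
  have hga : g a = b := by simp [hg, ha]
  have hgb : g b = τ b := by
    have h1 : τ b ≠ a := fun hc => hb (τ.injective (by rw [hc, ha]))
    simp [hg, Equiv.Perm.mul_apply, Equiv.swap_apply_of_ne_of_ne h1 hbs]
  have hag : g a ≠ a := by rw [hga]; exact hb
  -- support relation
  have hsupp : τ.support = g.support \ {a} := by
    have h2 : g (g a) ≠ a := by
      rw [hga, hgb]; exact fun hc => hb (τ.injective (by rw [hc, ha]))
    have := Equiv.Perm.support_swap_mul_eq g a h2
    rw [hga] at this
    rw [← this, hg]
    congr 1
    rw [← mul_assoc, Equiv.swap_mul_self, one_mul]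
  have hamem : a ∈ g.support := Equiv.Perm.mem_support.2 hag
  have hcard : g.support.card = τ.support.card + 1 := by
    rw [hsupp, Finset.sdiff_singleton_eq_erase, Finset.card_erase_of_mem hamem]
    have : 1 ≤ g.support.card := Finset.card_pos.2 ⟨a, hamem⟩
    omega
  refine ⟨?_, hcard⟩
  -- cycle factor removal
  have hma : g.cycleOf a ∈ g.cycleFactorsFinset :=
    Equiv.Perm.cycleOf_mem_cycleFactorsFinset_iff.2 (Equiv.Perm.mem_support.2 hag)
  have hmb : τ.cycleOf b ∈ τ.cycleFactorsFinset :=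
    Equiv.Perm.cycleOf_mem_cycleFactorsFinset_iff.2 (Equiv.Perm.mem_support.2 hbs)
  have heq : g * (g.cycleOf a)⁻¹ = τ * (τ.cycleOf b)⁻¹ := by
    ext x
    rw [Hrem, Hrem]
    by_cases hxa : x = a
    · subst hxa
      rw [if_pos (Equiv.Perm.SameCycle.refl _ _),
        if_neg (not_sameCycle_fix ha hb), ha]
    · by_cases hsc : τ.SameCycle b x
      · rw [if_pos ((B2 ha hb).2 (Or.inr hsc)), if_pos hsc]
      · rw [if_neg (fun hc => (((B2 ha hb).1 hc).elim hxa hsc)), if_neg hsc,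
          B1 ha hb hxa hsc]
  have h1 : (g * (g.cycleOf a)⁻¹).cycleType = g.cycleType - (g.cycleOf a).cycleType :=
    Equiv.Perm.cycleType_mul_inv_mem_cycleFactorsFinset_eq_sub hma
  have h2 : (τ * (τ.cycleOf b)⁻¹).cycleType = τ.cycleType - (τ.cycleOf b).cycleType :=
    Equiv.Perm.cycleType_mul_inv_mem_cycleFactorsFinset_eq_sub hmb
  have hle1 := Equiv.Perm.cycleType_le_of_mem_cycleFactorsFinset hma
  have hle2 := Equiv.Perm.cycleType_le_of_mem_cycleFactorsFinset hmb
  have hc1 : Multiset.card (g.cycleOf a).cycleType = 1 :=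
    Equiv.Perm.card_cycleType_eq_one.2 (Equiv.Perm.isCycle_cycleOf g hag)
  have hc2 : Multiset.card (τ.cycleOf b).cycleType = 1 :=
    Equiv.Perm.card_cycleType_eq_one.2 (Equiv.Perm.isCycle_cycleOf τ hbs)
  have e1 : Multiset.card (g * (g.cycleOf a)⁻¹).cycleType
      = Multiset.card g.cycleType - 1 := by
    rw [h1, Multiset.card_sub hle1, hc1]
  have e2 : Multiset.card (τ * (τ.cycleOf b)⁻¹).cycleType
      = Multiset.card τ.cycleType - 1 := by
    rw [h2, Multiset.card_sub hle2, hc2]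
  have hg1 : 1 ≤ Multiset.card g.cycleType := by
    rw [← hc1]; exact Multiset.card_le_card hle1
  have ht1 : 1 ≤ Multiset.card τ.cycleType := by
    rw [← hc2]; exact Multiset.card_le_card hle2
  rw [heq] at e1
  omega

noncomputable def cnt (σ : Perm α) : ℕ :=
  Multiset.card σ.cycleType + (Fintype.card α - σ.support.card)

lemma key {τ : Perm α} {a b : α} (ha : τ a = a) (hb : b ≠ a) :
    cnt (Equiv.swap a b * τ) + 1 = cnt τ := by
  have hN := Finset.card_le_univ (Equiv.swap a b * τ).support
  by_cases hbs : τ b = b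
  · -- disjoint case
    have hd : (Equiv.swap a b).Disjoint τ := by
      intro x
      by_cases hx : x = a ∨ x = b
      · rcases hx with rfl | rfl
        · exact Or.inr ha
        · exact Or.inr hbs
      · push_neg at hx
        exact Or.inl (Equiv.swap_apply_of_ne_of_ne hx.1 hx.2)
    have hct : (Equiv.swap a b * τ).cycleType = (Equiv.swap a b).cycleType + τ.cycleType :=
      hd.cycleType_mul
    have hsw : (Equiv.swap a b).cycleType = {2} := by
      rw [(Equiv.Perm.isCycle_swap hb.symm).cycleType, Equiv.Perm.support_swap hb.symm]
      simp [Finset.card_insert_of_notMem, hb.symm]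
    have hsupp : (Equiv.swap a b * τ).support = (Equiv.swap a b).support ∪ τ.support :=
      hd.support_mul
    have hdisj : Disjoint (Equiv.swap a b).support τ.support :=
      Equiv.Perm.Disjoint.disjoint_support hd
    have hcard : (Equiv.swap a b * τ).support.card = τ.support.card + 2 := by
      rw [hsupp, Finset.card_union_of_disjoint hdisj, Equiv.Perm.support_swap hb.symm]
      have : ({a, b} : Finset α).card = 2 := by
        rw [Finset.card_insert_of_notMem (by simpa using hb.symm), Finset.card_singleton]
      omega
    unfold cnt
    rw [hct, hsw, hcard]
    simp only [Multiset.card_add, Multiset.card_singleton]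
    rw [hcard] at hN
    omega
  · obtain ⟨h1, h2⟩ := keyB ha hb hbs
    unfold cnt
    rw [h1, h2]
    rw [h2] at hN
    omega

-- extension of e : Perm (Fin n) to Fin (n+1) fixing 0
lemma cnt_extend {n : ℕ} (e : Perm (Fin n)) :
    cnt (Equiv.Perm.decomposeFin.symm (0, e)) = cnt e + 1 := by
  set f := finSuccAboveEquiv (0 : Fin (n+1)) with hf
  have hfx : ∀ i : Fin n, ((f i : Fin (n+1))) = i.succ := by
    intro i; rw [hf, finSuccAboveEquiv_apply]; simp [Fin.succAbove]
  have hext : Equiv.Perm.decomposeFin.symm (0, e) = e.extendDomain f := by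
    ext x
    refine Fin.cases ?_ ?_ x
    · rw [Equiv.Perm.decomposeFin_symm_apply_zero,
        Equiv.Perm.extendDomain_apply_not_subtype]
      simp
    · intro i
      rw [Equiv.Perm.decomposeFin_symm_apply_succ]
      have : (i.succ : Fin (n+1)) = ((f i : Fin (n+1))) := (hfx i).symm
      rw [this]
      rw [Equiv.Perm.extendDomain_apply_image]
      simp [hfx]
  rw [hext]
  unfold cnt
  rw [Equiv.Perm.cycleType_extendDomain, Equiv.Perm.card_support_extend_domain]
  have := Finset.card_le_univ e.support
  simp only [Fintype.card_fin] at *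
  omega

lemma cnt_decompose {n : ℕ} (p : Fin (n+1)) (e : Perm (Fin n)) :
    cnt (Equiv.Perm.decomposeFin.symm (p, e)) + (if p = 0 then 0 else 1) = cnt e + 1 := by
  by_cases hp : p = 0
  · simp [hp, cnt_extend]
  · have hsp : Equiv.Perm.decomposeFin.symm (p, e)
        = Equiv.swap 0 p * Equiv.Perm.decomposeFin.symm (0, e) := by
      ext x
      refine Fin.cases ?_ ?_ x
      · simp
      · intro i
        simp [Equiv.Perm.decomposeFin_symm_apply_succ, Equiv.Perm.mul_apply]
    have h0 : Equiv.Perm.decomposeFin.symm (0, e) (0 : Fin (n+1)) = 0 := by simp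
    rw [hsp, if_neg hp]
    rw [key h0 hp, cnt_extend]


lemma fixcard (σ : Perm α) :
    Nat.card {x : α // σ x = x} = Fintype.card α - σ.support.card := by
  rw [Nat.card_eq_fintype_card, Fintype.card_subtype]
  have h := Finset.card_filter_add_card_filter_not
    (s := (univ : Finset α)) (p := fun x => σ x = x)
  have hs : σ.support = univ.filter (fun x => ¬ σ x = x) := rfl
  have h2 := Finset.card_le_univ (univ.filter (fun x => ¬ σ x = x))
  rw [hs]
  simp only [Finset.card_univ] at *
  omega

lemma sc_eq (n k : ℕ) :
    stirlingCycle n k = Nat.card {σ : Perm (Fin n) // cnt σ = k} := by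
  unfold stirlingCycle
  apply Nat.card_congr
  apply Equiv.subtypeEquivRight
  intro σ
  rw [fixcard]
  unfold cnt
  simp

lemma sc_zero_zero : stirlingCycle 0 0 = 1 := by
  rw [sc_eq]
  rw [Nat.card_eq_one_iff_unique]
  constructor
  · constructor
    rintro ⟨σ, -⟩ ⟨τ, -⟩
    have : σ = τ := Subsingleton.elim σ τ
    simp [this]
  · refine ⟨⟨1, ?_⟩⟩
    unfold cnt
    simp

lemma sc_zero_succ (k : ℕ) : stirlingCycle 0 (k+1) = 0 := by
  rw [sc_eq]
  rw [Nat.card_eq_zero]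
  left
  constructor
  rintro ⟨σ, hσ⟩
  have h1 : σ = 1 := Subsingleton.elim σ 1
  subst h1
  unfold cnt at hσ
  simp at hσ

lemma sc_rec (n j : ℕ) :
    stirlingCycle (n+1) j
      = Nat.card {e : Perm (Fin n) // cnt e + 1 = j}
        + n * Nat.card {e : Perm (Fin n) // cnt e = j} := by
  classical
  rw [sc_eq]
  have e1 : {σ : Perm (Fin (n+1)) // cnt σ = j}
      ≃ {x : Fin (n+1) × Perm (Fin n) // cnt (Equiv.Perm.decomposeFin.symm x) = j} :=
    Equiv.Perm.decomposeFin.subtypeEquiv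
      (q := fun x => cnt (Equiv.Perm.decomposeFin.symm x) = j)
      (fun σ => by simp only [Equiv.symm_apply_apply])
  have e2 : {x : Fin (n+1) × Perm (Fin n) // cnt (Equiv.Perm.decomposeFin.symm x) = j}
      ≃ Σ p : Fin (n+1), {e : Perm (Fin n) // cnt (Equiv.Perm.decomposeFin.symm (p, e)) = j} :=
    Equiv.subtypeProdEquivSigmaSubtype
      (fun (p : Fin (n+1)) (e : Perm (Fin n)) => cnt (Equiv.Perm.decomposeFin.symm (p, e)) = j)
  rw [Nat.card_congr (e1.trans e2), Nat.card_eq_fintype_card, Fintype.card_sigma,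
    Fin.sum_univ_succ]
  have h0 : Fintype.card {e : Perm (Fin n) //
      cnt (Equiv.Perm.decomposeFin.symm ((0 : Fin (n+1)), e)) = j}
      = Nat.card {e : Perm (Fin n) // cnt e + 1 = j} := by
    rw [← Nat.card_eq_fintype_card]
    apply Nat.card_congr
    apply Equiv.subtypeEquivRight
    intro e
    have := cnt_decompose (0 : Fin (n+1)) e
    rw [if_pos rfl, add_zero] at this
    rw [this]
  have hs : ∀ q : Fin n, Fintype.card {e : Perm (Fin n) //
      cnt (Equiv.Perm.decomposeFin.symm (q.succ, e)) = j}
      = Nat.card {e : Perm (Fin n) // cnt e = j} := by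
    intro q
    rw [← Nat.card_eq_fintype_card]
    apply Nat.card_congr
    apply Equiv.subtypeEquivRight
    intro e
    have := cnt_decompose q.succ e
    rw [if_neg (Fin.succ_ne_zero q)] at this
    have h' : cnt (Equiv.Perm.decomposeFin.symm (q.succ, e)) = cnt e := by omega
    rw [h']
  rw [h0]
  simp only [hs]
  rw [Finset.sum_const, Finset.card_univ, Fintype.card_fin, smul_eq_mul]

open Polynomial in
lemma asc_eq (n : ℕ) :
    ascPochhammer ℕ (n+1) = X * ∏ i : Fin n, (X + C ((i : ℕ) + 1)) := by
  induction n with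
  | zero => simp [ascPochhammer_one]
  | succ n IH =>
    rw [ascPochhammer_succ_right, IH, Fin.prod_univ_castSucc]
    simp only [Fin.coe_castSucc, Fin.val_last]
    rw [← Polynomial.C_eq_natCast]
    push_cast
    ring

open Polynomial in
lemma sc_coeff (n j : ℕ) :
    stirlingCycle n j = (ascPochhammer ℕ n).coeff j := by
  induction n generalizing j with
  | zero =>
    cases j with
    | zero => simpa using sc_zero_zero
    | succ j => rw [sc_zero_succ]; simp [Polynomial.coeff_one]
  | succ n IH =>
    have hstep : ∀ m : ℕ, (ascPochhammer ℕ (n+1)).coeff m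
        = (if m = 0 then 0 else (ascPochhammer ℕ n).coeff (m-1))
          + n * (ascPochhammer ℕ n).coeff m := by
      intro m
      rw [ascPochhammer_succ_right]
      have : ((n : ℕ) : ℕ[X]) = C (n : ℕ) := by simp [Polynomial.C_eq_natCast]
      rw [this, mul_add, Polynomial.coeff_add, Polynomial.coeff_mul_C]
      cases m with
      | zero => simp [mul_comm]
      | succ m => rw [Polynomial.coeff_mul_X]; simp [mul_comm]
    cases j with
    | zero =>
      rw [sc_rec, hstep 0]
      have h1 : Nat.card {e : Perm (Fin n) // cnt e + 1 = 0} = 0 := by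
        rw [Nat.card_eq_zero]; left
        exact ⟨fun ⟨e, he⟩ => by omega⟩
      rw [h1, ← sc_eq, IH]
      simp
    | succ j =>
      rw [sc_rec, hstep (j+1)]
      have h1 : Nat.card {e : Perm (Fin n) // cnt e + 1 = j + 1}
          = Nat.card {e : Perm (Fin n) // cnt e = j} := by
        apply Nat.card_congr; exact Equiv.subtypeEquivRight (fun e => by omega)
      rw [h1, ← sc_eq, ← sc_eq, IH, IH]
      simp

lemma hsum_lemma (n k : ℕ) : (∑ f ∈ Finset.univ.filter (fun f : Fin k → Fin n =>
        ∀ a b : Fin k, a < b → f a < f b),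
      ∏ i : Fin k, ((f i : ℕ) + 1))
      = ∑ t ∈ (Finset.univ : Finset (Fin n)).powersetCard k,
          ∏ x ∈ t, ((x : ℕ) + 1) := by
    apply Finset.sum_bij' (i := fun f _ => Finset.image f Finset.univ)
      (j := fun t ht => fun (x : Fin k) =>
        t.orderEmbOfFin (Finset.mem_powersetCard.1 ht).2 x)
    case hi =>
      intro f hf
      have hmono : StrictMono f := fun a b h =>
        (Finset.mem_filter.1 hf).2 a b h
      rw [Finset.mem_powersetCard]
      refine ⟨Finset.subset_univ _, ?_⟩
      rw [Finset.card_image_of_injective _ hmono.injective, Finset.card_univ,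
        Fintype.card_fin]
    case hj =>
      intro t ht
      rw [Finset.mem_filter]
      exact ⟨Finset.mem_univ _, fun a b h =>
        (t.orderEmbOfFin (Finset.mem_powersetCard.1 ht).2).strictMono h⟩
    case left_neg =>
      intro f hf
      have hmono : StrictMono f := fun a b h =>
        (Finset.mem_filter.1 hf).2 a b h
      have h2 := Finset.orderEmbOfFin_unique
        (s := Finset.image f Finset.univ)
        (by rw [Finset.card_image_of_injective _ hmono.injective,
              Finset.card_univ, Fintype.card_fin])
        (fun x => Finset.mem_image_of_mem f (Finset.mem_univ x)) hmono
      exact funext fun x => (congrFun h2 x).symm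
    case right_neg =>
      intro t ht
      apply Finset.coe_injective
      rw [Finset.coe_image, Finset.coe_univ, Set.image_univ]
      exact Finset.range_orderEmbOfFin t (Finset.mem_powersetCard.1 ht).2
    case h =>
      intro f hf
      have hmono : StrictMono f := fun a b h =>
        (Finset.mem_filter.1 hf).2 a b h
      rw [Finset.prod_image (fun x _ y _ h => hmono.injective h)]

theorem stmt_8 (n k : ℕ) (hk : k ≤ n) :
    ∑ f ∈ Finset.univ.filter (fun f : Fin k → Fin n =>
        ∀ a b : Fin k, a < b → f a < f b),
      ∏ i : Fin k, ((f i : ℕ) + 1) = stirlingCycle (n + 1) (n + 1 - k) := by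
  rw [hsum_lemma]
  have hle : n - k ≤ (Finset.univ : Finset (Fin n)).card := by
    rw [Finset.card_univ, Fintype.card_fin]; omega
  have hcoeff := Finset.prod_X_add_C_coeff (R := ℕ) (Finset.univ : Finset (Fin n))
    (fun i => (i : ℕ) + 1) hle
  rw [Finset.card_univ, Fintype.card_fin] at hcoeff
  have hnk : n - (n - k) = k := by omega
  rw [hnk] at hcoeff
  rw [← hcoeff, sc_coeff, asc_eq]
  have h1 : n + 1 - k = (n - k) + 1 := by omega
  rw [h1, Polynomial.coeff_X_mul]
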